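/- In MvPolynomial (Fin 2) ℝ with the Pell difference structure, if a polynomial g satisfies (α² + α + 2β) * σ(g) + (β² + 2β) * g = 0, then g = 0; that is, the homogeneous equation has only the zero polynomial solution. -/

import Mathlib

open MvPolynomial

noncomputable section PellAux

abbrev R2 := MvPolynomial (Fin 2) ℝ

lemma pell_aux_two_eq_C : (2 : R2) = C (2:ℝ) := (map_ofNat C 2).symm

lemma pell_aux_half_two : (C (1/2:ℝ) : R2) * 2 = 1 := by
  rw [pell_aux_two_eq_C, ← C_mul]; norm_num

lemma pell_aux_primeX0 : Prime (X 0 : R2) := by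
  have h := (MulEquiv.prime_iff (MvPolynomial.finSuccEquiv ℝ 1).toMulEquiv (p := (X 0 : R2))).symm
  rw [h]
  simpa [MvPolynomial.finSuccEquiv_X_zero] using Polynomial.prime_X (R := MvPolynomial (Fin 1) ℝ)

lemma pell_aux_primeX1 : Prime (X 1 : R2) := by
  let e := MvPolynomial.renameEquiv ℝ (Equiv.swap (0 : Fin 2) 1)
  have h := (MulEquiv.prime_iff e.toMulEquiv (p := (X 0 : R2))).symm
  have h2 : e.toMulEquiv (X 0) = X 1 := by simp [e, rename_X]
  exact (h2 ▸ h.mp pell_aux_primeX0 : _)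

def pellPhi : R2 →ₐ[ℝ] R2 := aeval ![X 0, X 1 + C (1/2) * (X 0 ^ 2 + X 0)]
def pellPsi : R2 →ₐ[ℝ] R2 := aeval ![X 0, X 1 - C (1/2) * (X 0 ^ 2 + X 0)]

lemma pellPhiPsi : pellPhi.comp pellPsi = AlgHom.id ℝ R2 := by
  apply MvPolynomial.algHom_ext
  intro i
  fin_cases i <;> simp [pellPhi, pellPsi, algebraMap_eq] <;> ring

lemma pellPsiPhi : pellPsi.comp pellPhi = AlgHom.id ℝ R2 := by
  apply MvPolynomial.algHom_ext
  intro i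
  fin_cases i <;> simp [pellPhi, pellPsi, algebraMap_eq] <;> ring

def pellPhiE : R2 ≃ₐ[ℝ] R2 := AlgEquiv.ofAlgHom pellPhi pellPsi pellPhiPsi pellPsiPhi

lemma pell_aux_primeA : Prime ((X 0) ^ 2 + X 0 + 2 * X 1 : R2) := by
  have h := (MulEquiv.prime_iff pellPhiE.toMulEquiv (p := (X 1 : R2))).symm
  have hp1 : Prime (pellPhiE.toMulEquiv (X 1)) := h.mp pell_aux_primeX1
  have h2 : pellPhiE.toMulEquiv (X 1) = X 1 + C (1/2) * (X 0 ^ 2 + X 0) := by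
    simp [pellPhiE, pellPhi, algebraMap_eq]
  rw [h2] at hp1
  have hassoc : Associated (X 1 + C (1/2) * (X 0 ^ 2 + X 0) : R2)
      ((X 0) ^ 2 + X 0 + 2 * X 1) := by
    refine associated_of_dvd_dvd ⟨2, by linear_combination (-(X 0 ^ 2 + X 0)) * pell_aux_half_two⟩
      ⟨C (1/2 : ℝ), ?_⟩
    linear_combination (-(X 1 : R2)) * pell_aux_half_two
  exact hassoc.prime hp1

lemma pell_aux_A_not_dvd_lin (a b c : ℝ) (hab : ¬ (a = 0 ∧ b = 0)) :
    ¬ ((X 0) ^ 2 + X 0 + 2 * X 1 : R2) ∣ (C a * X 0 + C b * X 1 + C c) := by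
  rintro ⟨k, hk⟩
  have key : ∀ t : ℝ, a * t + b * ((-t + -t^2)/2) + c = 0 := by
    intro t
    have h := congrArg (MvPolynomial.eval ![t, (-t + -t^2)/2]) hk
    simp [eval_X, eval_C] at h
    have hz : (t ^ 2 + t + 2 * ((-t + -t ^ 2) / 2)) = 0 := by ring
    rw [hz, zero_mul] at h
    linarith [h]
  have h0 := key 0
  have h1 := key 1
  have h2 := key (-1)
  apply hab
  constructor <;> nlinarith [h0, h1, h2]

end PellAux

theorem pell_homogeneous_only_zero
    (σ : MvPolynomial (Fin 2) ℝ →ₐ[ℝ] MvPolynomial (Fin 2) ℝ)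
    (hσα : σ (X 0) = X 1)
    (hσβ : σ (X 1) = X 0 + 2 * X 1)
    (g : MvPolynomial (Fin 2) ℝ)
    (heq : ((X 0) ^ 2 + X 0 + 2 * X 1) * σ g + ((X 1) ^ 2 + 2 * X 1) * g = 0) :
    g = 0 := by
  classical
  -- inverse of σ
  let τ : R2 →ₐ[ℝ] R2 := aeval ![X 1 - 2 * X 0, X 0]
  have hστ : σ.comp τ = AlgHom.id ℝ R2 := by
    apply MvPolynomial.algHom_ext
    intro i
    fin_cases i <;> simp [τ, hσα, hσβ, map_ofNat] <;> ring
  have hτσ : τ.comp σ = AlgHom.id ℝ R2 := by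
    apply MvPolynomial.algHom_ext
    intro i
    fin_cases i <;> simp [τ, hσα, hσβ, map_ofNat] <;> ring
  have hτσ' : ∀ p : R2, τ (σ p) = p := fun p => DFunLike.congr_fun hτσ p
  let e : R2 ≃ₐ[ℝ] R2 := AlgEquiv.ofAlgHom σ τ hστ hτσ
  have hprimeσ : ∀ p : R2, Prime p → Prime (σ p) := by
    intro p hp
    exact (MulEquiv.prime_iff e.toMulEquiv (p := p)).symm.mp hp
  -- the "divides no affine-linear polynomial" property
  set Lin : R2 → Prop :=
    fun p => ∀ a b c : ℝ, ¬ (a = 0 ∧ b = 0) → ¬ p ∣ (C a * X 0 + C b * X 1 + C c) with hLin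
  have hLinσ : ∀ p : R2, Lin p → Lin (σ p) := by
    intro p hp a b c hab hdvd
    have hd2 : τ (σ p) ∣ τ (C a * X 0 + C b * X 1 + C c) := map_dvd τ hdvd
    rw [hτσ'] at hd2
    have himg : τ (C a * X 0 + C b * X 1 + C c)
        = C (b - 2*a) * X 0 + C a * X 1 + C c := by
      simp [τ, algebraMap_eq]
      linear_combination (-(C a * X 0 : R2)) * pell_aux_two_eq_C
    rw [himg] at hd2
    refine hp (b - 2*a) a c ?_ hd2
    rintro ⟨h1, h2⟩
    exact hab ⟨h2, by linarith⟩
  have h2C : (2 : R2) = C (2:ℝ) := pell_aux_two_eq_C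
  -- main well-founded induction
  have main : ∀ g : R2, ∀ p : R2, Prime p → Lin p →
      p * σ g + ((X 1) ^ 2 + 2 * X 1) * g = 0 → g = 0 := by
    intro g
    induction g using WellFounded.induction (wellFounded_dvdNotUnit (α := R2)) with
    | _ g IH =>
      intro p hp hLp heqg
      by_contra hg
      have hdvd : p ∣ X 1 * ((X 1 + C 2) * g) := by
        refine ⟨-σ g, ?_⟩
        linear_combination heqg - X 1 * g * h2C
      rcases hp.2.2 _ _ hdvd with h | h
      · exact hLp 0 1 0 (by norm_num) (by simpa using h)
      rcases hp.2.2 _ _ h with h' | h'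
      · exact hLp 0 1 2 (by norm_num) (by simpa using h')
      obtain ⟨h1, hh⟩ := h'
      have hh1 : h1 ≠ 0 := by
        rintro rfl
        rw [mul_zero] at hh
        exact hg hh
      have hσg : σ g = σ p * σ h1 := by rw [hh, map_mul]
      have hz : p * (σ p * σ h1 + ((X 1) ^ 2 + 2 * X 1) * h1) = 0 := by
        rw [hσg, hh] at heqg
        linear_combination heqg
      have heq' : σ p * σ h1 + ((X 1) ^ 2 + 2 * X 1) * h1 = 0 :=
        (mul_eq_zero.mp hz).resolve_left hp.ne_zero
      have hdnu : DvdNotUnit h1 g := ⟨hh1, p, hp.not_unit, by rw [hh, mul_comm]⟩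
      exact hh1 (IH h1 hdnu (σ p) (hprimeσ p hp) (hLinσ p hLp) heq')
  exact main g ((X 0) ^ 2 + X 0 + 2 * X 1) pell_aux_primeA
    (fun a b c hab => pell_aux_A_not_dvd_lin a b c hab) heq
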